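/- Let Q(τ) = τ^{m-1}·Q̂(τ) where Q̂ is a polynomial with Q̂(0) > 0 and all coefficients of Q nonnegative, and let μ < 0, m ≥ 2. Define φ(τ) = (e^{μτ}/Q(τ)) ∫_0^τ m e^{-μx} Q(x) dx for τ > 0. Then φ extends continuously to τ = 0 with φ(0) = 0, and φ(τ) = -m/μ + O(1/τ) as τ → ∞. -/

import Mathlib

open Real Filter Asymptotics intervalIntegral

lemma aux_eval_nonneg {p : Polynomial ℝ} (hp : ∀ j, 0 ≤ p.coeff j)
    {x : ℝ} (hx : 0 ≤ x) : 0 ≤ p.eval x := by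
  rw [p.eval_eq_sum_range]
  exact Finset.sum_nonneg fun i _ => mul_nonneg (hp i) (pow_nonneg hx i)

lemma aux_eval_mono {p : Polynomial ℝ} (hp : ∀ j, 0 ≤ p.coeff j)
    {x y : ℝ} (hx : 0 ≤ x) (hxy : x ≤ y) : p.eval x ≤ p.eval y := by
  rw [p.eval_eq_sum_range, p.eval_eq_sum_range]
  exact Finset.sum_le_sum fun i _ =>
    mul_le_mul_of_nonneg_left (pow_le_pow_left₀ hx hxy i) (hp i)

lemma aux_deriv_bound {p : Polynomial ℝ} (hp : ∀ j, 0 ≤ p.coeff j)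
    {x : ℝ} (hx : 0 ≤ x) :
    x * (Polynomial.derivative p).eval x ≤ p.natDegree * p.eval x := by
  set n := p.natDegree with hn
  have h1 : x * (Polynomial.derivative p).eval x
      = ∑ i ∈ Finset.range (n + 1), p.coeff (i+1) * ((i:ℝ)+1) * x^(i+1) := by
    rw [Polynomial.eval_eq_sum_range' (Nat.lt_succ_of_le
      ((Polynomial.natDegree_derivative_le p).trans (Nat.sub_le _ 1))) x,
      Finset.mul_sum]
    refine Finset.sum_congr rfl fun i _ => ?_
    rw [Polynomial.coeff_derivative]
    ring
  have h2 : p.eval x = p.coeff 0 * x ^ 0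
      + ∑ i ∈ Finset.range (n + 1), p.coeff (i+1) * x^(i+1) := by
    rw [Polynomial.eval_eq_sum_range' (Nat.lt_succ_of_lt (Nat.lt_succ_self _)) x,
      Finset.sum_range_succ']
    ring
  rw [h1, h2]
  have hsum : ∑ i ∈ Finset.range (n + 1), p.coeff (i+1) * ((i:ℝ)+1) * x^(i+1)
      ≤ ∑ i ∈ Finset.range (n + 1), (n : ℝ) * (p.coeff (i+1) * x^(i+1)) := by
    refine Finset.sum_le_sum fun i _ => ?_
    rcases le_or_gt (i+1) n with h | h
    · have hin : ((i:ℝ)+1) ≤ n := by exact_mod_cast h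
      have := mul_nonneg (hp (i+1)) (pow_nonneg hx (i+1))
      nlinarith
    · have hz : p.coeff (i+1) = 0 := Polynomial.coeff_eq_zero_of_natDegree_lt h
      simp [hz]
  calc _ ≤ ∑ i ∈ Finset.range (n + 1), (n : ℝ) * (p.coeff (i+1) * x^(i+1)) := hsum
    _ = (n:ℝ) * ∑ i ∈ Finset.range (n + 1), p.coeff (i+1) * x^(i+1) := by
        rw [Finset.mul_sum]
    _ ≤ (n:ℝ) * (p.coeff 0 * x ^ 0 + ∑ i ∈ Finset.range (n + 1), p.coeff (i+1) * x^(i+1)) := by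
        have h0 : 0 ≤ p.coeff 0 * x ^ 0 := mul_nonneg (hp 0) (pow_nonneg hx 0)
        nlinarith [Finset.sum_nonneg (fun i (_ : i ∈ Finset.range (n+1)) =>
          mul_nonneg (hp (i+1)) (pow_nonneg hx (i+1)))]

/-- Let `Q τ = τ^{m-1}·Q̂ τ` with `Q̂` a polynomial, `Q̂(0) > 0`, all
coefficients nonnegative, `μ < 0`, `m ≥ 2`, and
`φ τ = (e^{μτ}/Q τ) ∫_0^τ m e^{-μx} Q x dx` for `τ > 0`. Then `φ` extends continuously
to `τ = 0` with value `0`, and `φ(τ) = -m/μ + O(1/τ)` as `τ → ∞`. -/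
theorem stmt_18 (m : ℕ) (hm : 2 ≤ m) (μ : ℝ) (hμ : μ < 0)
    (Qhat : Polynomial ℝ) (hQ0 : 0 < Qhat.eval 0) (hcoeff : ∀ j, 0 ≤ Qhat.coeff j)
    (Q φ : ℝ → ℝ) (hQ : ∀ τ : ℝ, Q τ = τ ^ (m - 1) * Qhat.eval τ)
    (hφ : ∀ τ : ℝ, 0 < τ → φ τ =
      Real.exp (μ * τ) / Q τ * ∫ x in (0:ℝ)..τ, (m : ℝ) * Real.exp (-μ * x) * Q x) :
    Tendsto φ (nhdsWithin 0 (Set.Ioi 0)) (nhds 0) ∧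
    (fun τ => φ τ - (-(m : ℝ) / μ)) =O[atTop] (fun τ => 1 / τ) := by
  -- the polynomial P with Q = eval P
  obtain ⟨P, hPdef⟩ : ∃ P : Polynomial ℝ, P = Qhat * Polynomial.X ^ (m-1) := ⟨_, rfl⟩
  have hPc : ∀ j, 0 ≤ P.coeff j := by
    intro j
    rw [hPdef, Polynomial.coeff_mul_X_pow']
    split
    · exact hcoeff _
    · exact le_refl 0
  have hQP : ∀ τ, Q τ = P.eval τ := by
    intro τ; rw [hQ, hPdef]; simp [mul_comm]
  have hP0 : P.eval 0 = 0 := by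
    rw [hPdef]; simp [zero_pow (by omega : m - 1 ≠ 0)]
  have hQpos : ∀ τ : ℝ, 0 < τ → 0 < Q τ := by
    intro τ hτ
    rw [hQ]
    have h1 : 0 < τ ^ (m-1) := pow_pos hτ _
    have h2 : Qhat.eval 0 ≤ Qhat.eval τ := by
      have := aux_eval_mono hcoeff (le_refl (0:ℝ)) hτ.le
      exact this
    exact mul_pos h1 (lt_of_lt_of_le hQ0 h2)
  have hQc : Continuous Q := by
    have : Q = fun τ => P.eval τ := funext hQP
    rw [this]; exact P.continuous
  have hQnn : ∀ x : ℝ, 0 ≤ x → 0 ≤ Q x := by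
    intro x hx; rw [hQP]; exact aux_eval_nonneg hPc hx
  have hfc : Continuous fun x : ℝ => (m:ℝ) * Real.exp (-μ * x) * Q x := by
    exact (continuous_const.mul ((continuous_const.mul continuous_id).rexp)).mul hQc
  -- Part 1
  have part1 : Tendsto φ (nhdsWithin 0 (Set.Ioi 0)) (nhds 0) := by
    have hg : Tendsto (fun τ : ℝ => (m:ℝ) * τ) (nhdsWithin 0 (Set.Ioi 0)) (nhds 0) := by
      have h := ((continuous_const.mul continuous_id :
        Continuous fun τ : ℝ => (m:ℝ) * τ).tendsto (0:ℝ)).mono_left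
        (nhdsWithin_le_nhds (s := Set.Ioi (0:ℝ)))
      simp only [Pi.mul_apply, mul_zero] at h
      exact h
    refine squeeze_zero' ?_ ?_ hg
    · filter_upwards [self_mem_nhdsWithin] with τ hτ
      have hτ : (0:ℝ) < τ := hτ
      rw [hφ τ hτ]
      refine mul_nonneg (div_nonneg (Real.exp_pos _).le (hQpos τ hτ).le) ?_
      refine intervalIntegral.integral_nonneg hτ.le fun x hx => ?_
      exact mul_nonneg (mul_nonneg (by positivity) (Real.exp_pos _).le) (hQnn x hx.1)
    · filter_upwards [self_mem_nhdsWithin] with τ hτ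
      have hτ : (0:ℝ) < τ := hτ
      rw [hφ τ hτ]
      have hI : (∫ x in (0:ℝ)..τ, (m:ℝ) * Real.exp (-μ*x) * Q x)
          ≤ τ * ((m:ℝ) * Real.exp (-μ*τ) * Q τ) := by
        have hb : (∫ x in (0:ℝ)..τ, (m:ℝ) * Real.exp (-μ*x) * Q x)
            ≤ ∫ _x in (0:ℝ)..τ, (m:ℝ) * Real.exp (-μ*τ) * Q τ := by
          refine intervalIntegral.integral_mono_on hτ.le
            (hfc.intervalIntegrable 0 τ) (intervalIntegrable_const) fun x hx => ?_
          have he : Real.exp (-μ*x) ≤ Real.exp (-μ*τ) := by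
            apply Real.exp_le_exp.2
            nlinarith [hx.1, hx.2]
          have hQm : Q x ≤ Q τ := by
            rw [hQP, hQP]; exact aux_eval_mono hPc hx.1 hx.2
          have hQxnn := hQnn x hx.1
          have hm0 : (0:ℝ) ≤ (m:ℝ) := by positivity
          exact mul_le_mul (mul_le_mul_of_nonneg_left he hm0) hQm hQxnn (by positivity)
        rwa [intervalIntegral.integral_const, sub_zero, smul_eq_mul] at hb
      have hpos : 0 < Real.exp (μ*τ) / Q τ := div_pos (Real.exp_pos _) (hQpos τ hτ)
      calc Real.exp (μ*τ) / Q τ * ∫ x in (0:ℝ)..τ, (m:ℝ) * Real.exp (-μ*x) * Q x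
          ≤ Real.exp (μ*τ) / Q τ * (τ * ((m:ℝ) * Real.exp (-μ*τ) * Q τ)) :=
            mul_le_mul_of_nonneg_left hI hpos.le
        _ = (m:ℝ) * τ := by
            rw [neg_mul, Real.exp_neg]
            field_simp [(hQpos τ hτ).ne']
  refine ⟨part1, ?_⟩
  -- Part 2
  obtain ⟨P', hP'def⟩ : ∃ P' : Polynomial ℝ, P' = Polynomial.derivative P := ⟨_, rfl⟩
  have hP'c : ∀ j, 0 ≤ P'.coeff j := by
    intro j
    rw [hP'def, Polynomial.coeff_derivative]
    have h := hPc (j+1)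
    positivity
  have hgc : Continuous fun s : ℝ => Real.exp (-μ*s) * P'.eval s :=
    ((continuous_const.mul continuous_id).rexp).mul P'.continuous
  obtain ⟨J, hJdef⟩ : ∃ J : ℝ → ℝ,
      J = fun x => ∫ s in (0:ℝ)..x, Real.exp (-μ*s) * P'.eval s := ⟨_, rfl⟩
  have key : ∀ τ : ℝ, 0 < τ →
      φ τ - (-(m:ℝ)/μ) = (m/μ) * (Real.exp (μ*τ) * J τ / Q τ) := by
    intro τ hτ
    have hderiv : ∀ x ∈ Set.uIcc (0:ℝ) τ, HasDerivAt
        (fun x => -((m:ℝ)/μ) * (Real.exp (-μ*x) * P.eval x) + (m/μ) * J x)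
        ((m:ℝ) * Real.exp (-μ*x) * Q x) x := by
      intro x _
      have h0 : HasDerivAt (fun x : ℝ => -μ * x) (-μ) x := by
        simpa using (hasDerivAt_id x).const_mul (-μ)
      have h1 : HasDerivAt (fun x : ℝ => Real.exp (-μ*x)) (Real.exp (-μ*x) * -μ) x := h0.exp
      have h2 : HasDerivAt (fun x : ℝ => P.eval x) (P'.eval x) x := hP'def ▸ P.hasDerivAt x
      have h3 := h1.mul h2
      have h4 : HasDerivAt J (Real.exp (-μ*x) * P'.eval x) x := by
        rw [hJdef]; exact (hgc.integral_hasStrictDerivAt 0 x).hasDerivAt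
      have := ((h3.const_mul (-((m:ℝ)/μ))).add (h4.const_mul ((m:ℝ)/μ)))
      refine this.congr_deriv ?_
      rw [hQP]
      field_simp [hμ.ne]
      ring
    have hI : (∫ x in (0:ℝ)..τ, (m:ℝ) * Real.exp (-μ*x) * Q x)
        = -((m:ℝ)/μ) * (Real.exp (-μ*τ) * P.eval τ) + (m/μ) * J τ := by
      rw [intervalIntegral.integral_eq_sub_of_hasDerivAt hderiv (hfc.intervalIntegrable 0 τ)]
      simp [hJdef, hP0, intervalIntegral.integral_same]
    have hPτ : (0:ℝ) < P.eval τ := by rw [← hQP]; exact hQpos τ hτ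
    have hgen : ∀ (E v Jv M : ℝ), E ≠ 0 → v ≠ 0 →
        E / v * (-(M/μ) * (E⁻¹ * v) + M/μ * Jv) - -M/μ = M/μ * (E * Jv / v) := by
      intro E v Jv M hE hv
      have hμ0 : μ ≠ 0 := hμ.ne
      field_simp
      ring
    rw [hφ τ hτ, hI, hQP, show -μ*τ = -(μ*τ) by ring, Real.exp_neg]
    exact hgen _ _ _ _ (Real.exp_ne_zero _) hPτ.ne'
  rw [isBigO_iff]
  refine ⟨(m:ℝ) * P.natDegree / μ^2, eventually_atTop.2 ⟨1, fun τ hτ => ?_⟩⟩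
  have hτ0 : (0:ℝ) < τ := lt_of_lt_of_le one_pos hτ
  have hQτ := hQpos τ hτ0
  have hJnn : 0 ≤ J τ := by
    rw [hJdef]
    refine intervalIntegral.integral_nonneg hτ0.le fun s hs => ?_
    exact mul_nonneg (Real.exp_pos _).le (aux_eval_nonneg hP'c hs.1)
  -- bound on J
  have hint_exp : (∫ s in (0:ℝ)..τ, Real.exp (-μ*s))
      = Real.exp (-μ*τ) / (-μ) - 1 / (-μ) := by
    have hd : ∀ s ∈ Set.uIcc (0:ℝ) τ, HasDerivAt
        (fun s : ℝ => Real.exp (-μ*s) / (-μ)) (Real.exp (-μ*s)) s := by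
      intro s _
      have h0 : HasDerivAt (fun s : ℝ => -μ * s) (-μ) s := by
        simpa using (hasDerivAt_id s).const_mul (-μ)
      have h1 : HasDerivAt (fun s : ℝ => Real.exp (-μ*s)) (Real.exp (-μ*s) * -μ) s := h0.exp
      have := h1.div_const (-μ)
      refine this.congr_deriv ?_
      rw [mul_div_assoc, div_self (neg_ne_zero.2 hμ.ne), mul_one]
    rw [intervalIntegral.integral_eq_sub_of_hasDerivAt hd
      (((continuous_const.mul continuous_id).rexp).intervalIntegrable 0 τ)]
    simp
  have hJle : J τ ≤ P'.eval τ * (Real.exp (-μ*τ) / (-μ)) := by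
    have hb : J τ ≤ ∫ s in (0:ℝ)..τ, P'.eval τ * Real.exp (-μ*s) := by
      rw [hJdef]
      refine intervalIntegral.integral_mono_on hτ0.le (hgc.intervalIntegrable 0 τ)
        ((continuous_const.mul ((continuous_const.mul continuous_id).rexp)).intervalIntegrable 0 τ)
        fun s hs => ?_
      have hPm : P'.eval s ≤ P'.eval τ := aux_eval_mono hP'c hs.1 hs.2
      have := Real.exp_pos (-μ*s)
      nlinarith [aux_eval_nonneg hP'c hs.1]
    have hc : (∫ s in (0:ℝ)..τ, P'.eval τ * Real.exp (-μ*s))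
        = P'.eval τ * (Real.exp (-μ*τ) / (-μ) - 1/(-μ)) := by
      rw [intervalIntegral.integral_const_mul, hint_exp]
    rw [hc] at hb
    have hP'nn : 0 ≤ P'.eval τ := aux_eval_nonneg hP'c hτ0.le
    have h1μ : 0 < -μ := neg_pos.2 hμ
    nlinarith [mul_nonneg hP'nn (le_of_lt (one_div_pos.2 h1μ))]
  -- final bound
  rw [key τ hτ0]
  have hdb : τ * P'.eval τ ≤ P.natDegree * P.eval τ := hP'def ▸ aux_deriv_bound hPc hτ0.le
  have hμ' : 0 < -μ := neg_pos.2 hμ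
  have hPev : 0 < P.eval τ := by rw [← hQP]; exact hQτ
  have hexp_pos := Real.exp_pos (μ*τ)
  have hmain : Real.exp (μ*τ) * J τ / Q τ ≤ (P.natDegree : ℝ) / ((-μ) * τ) := by
    rw [hQP]
    have h1 : Real.exp (μ*τ) * J τ ≤ Real.exp (μ*τ) * (P'.eval τ * (Real.exp (-μ*τ) / (-μ))) :=
      mul_le_mul_of_nonneg_left hJle hexp_pos.le
    have h2 : Real.exp (μ*τ) * (P'.eval τ * (Real.exp (-μ*τ) / (-μ)))
        = P'.eval τ / (-μ) := by
      rw [neg_mul, Real.exp_neg]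
      field_simp [hμ.ne]
    rw [h2] at h1
    rw [div_le_div_iff₀ hPev (by positivity)]
    calc Real.exp (μ*τ) * J τ * ((-μ)*τ) ≤ P'.eval τ / (-μ) * ((-μ)*τ) := by
          apply mul_le_mul_of_nonneg_right h1 (by positivity)
      _ = τ * P'.eval τ := by field_simp [hμ.ne]
      _ ≤ (P.natDegree : ℝ) * P.eval τ := hdb
  have habs : |(m:ℝ)/μ * (Real.exp (μ*τ) * J τ / Q τ)|
      ≤ (m:ℝ) * P.natDegree / μ^2 * |1/τ| := by
    have hJQnn : 0 ≤ Real.exp (μ*τ) * J τ / Q τ :=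
      div_nonneg (mul_nonneg hexp_pos.le hJnn) hQτ.le
    have h1 : |(m:ℝ)/μ| = (m:ℝ)/(-μ) := by
      rw [abs_div, abs_of_nonneg (by positivity : (0:ℝ) ≤ (m:ℝ)), abs_of_neg hμ]
    rw [abs_mul, h1, abs_of_nonneg hJQnn,
      abs_of_nonneg (by positivity : (0:ℝ) ≤ 1/τ)]
    calc (m:ℝ)/(-μ) * (Real.exp (μ*τ) * J τ / Q τ)
        ≤ (m:ℝ)/(-μ) * ((P.natDegree:ℝ)/((-μ)*τ)) :=
          mul_le_mul_of_nonneg_left hmain (div_nonneg (by positivity) hμ'.le)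
      _ = (m:ℝ) * P.natDegree / μ^2 * (1/τ) := by
          field_simp
  calc ‖(m:ℝ)/μ * (Real.exp (μ*τ) * J τ / Q τ)‖ = |(m:ℝ)/μ * (Real.exp (μ*τ) * J τ / Q τ)| := rfl
    _ ≤ (m:ℝ) * P.natDegree / μ^2 * |1/τ| := habs
    _ = (m:ℝ) * P.natDegree / μ^2 * ‖1/τ‖ := rfl
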